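/- Let r≥2 be an integer and θ∈C_p(ℝ) with θ(x)=x² on [0,1/r]. Let U_θ(x)=Σ_{j≥0} r^{-j}θ(r^j x). Then for every n∈ℕ₀, Δ_{n,0}(1/r;U_θ) = -2/(r-1). In particular, U_θ does not belong to P=∪_{c>0}P_c. -/
import Mathlib


/-- `C_p(ℝ)`: continuous, periodic with period 1, vanishing at 0. -/
def IsCp (f : ℝ → ℝ) : Prop := Continuous f ∧ (∀ x, f (x + 1) = f x) ∧ f 0 = 0

/-- Forward difference δ⁺_{n,k}(y;f). -/
noncomputable def delP (r : ℕ) (f : ℝ → ℝ) (n : ℕ) (k : ℤ) (y : ℝ) : ℝ :=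
  (f (((k : ℝ) + 1) / (r : ℝ) ^ n) - f (((k : ℝ) + y) / (r : ℝ) ^ n)) / ((1 - y) / (r : ℝ) ^ n)

/-- Backward difference δ⁻_{n,k}(y;f). -/
noncomputable def delM (r : ℕ) (f : ℝ → ℝ) (n : ℕ) (k : ℤ) (y : ℝ) : ℝ :=
  (f (((k : ℝ) + y) / (r : ℝ) ^ n) - f ((k : ℝ) / (r : ℝ) ^ n)) / (y / (r : ℝ) ^ n)

/-- Second-order central difference Δ_{n,k}(y;f). -/
noncomputable def Del (r : ℕ) (f : ℝ → ℝ) (n : ℕ) (k : ℤ) (y : ℝ) : ℝ :=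
  2 * (r : ℝ) ^ n * (delP r f n k y - delM r f n k y)

/-- The operator U: U_ψ(x) = Σ_{j≥0} ψ(rʲx)/rʲ. -/
noncomputable def Uop (r : ℕ) (ψ : ℝ → ℝ) (x : ℝ) : ℝ := ∑' j : ℕ, ψ ((r : ℝ) ^ j * x) / (r : ℝ) ^ j

/-- Distance to the integers. -/
noncomputable def dZ (x : ℝ) : ℝ := Metric.infDist x (Set.range (Int.cast : ℤ → ℝ))

/-- The generalized Takagi function τ_r. -/
noncomputable def tak (r : ℕ) : ℝ → ℝ := Uop r dZ

/-- The class P_c: Δ_{n,k}(y;f) ≤ -2crⁿ for all admissible (n,k,y). -/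
def memP (r : ℕ) (c : ℝ) (f : ℝ → ℝ) : Prop :=
  ∀ (n : ℕ) (k : ℤ), 0 ≤ k → k ≤ (r : ℤ) ^ n - 1 →
    ∀ y ∈ Set.Ioo (0 : ℝ) 1, Del r f n k y ≤ -2 * c * (r : ℝ) ^ n

/-- The parabola q_f(t,x;z). -/
noncomputable def qf (f : ℝ → ℝ) (t x z : ℝ) : ℝ := f z + (x - z) ^ 2 / (2 * t)

lemma theta_nat (θ : ℝ → ℝ) (hp : ∀ x, θ (x + 1) = θ x) (h0 : θ 0 = 0) :
    ∀ n : ℕ, θ n = 0 := by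
  intro n
  induction n with
  | zero => simpa using h0
  | succ k ih => have := hp k; push_cast; rw [this]; exact ih

lemma key (r : ℕ) (hr : 2 ≤ r) (θ : ℝ → ℝ) (hp : ∀ x, θ (x + 1) = θ x) (h0 : θ 0 = 0)
    (hθsq : ∀ x ∈ Set.Icc (0:ℝ) (1 / (r:ℝ)), θ x = x ^ 2) (m : ℕ) :
    Uop r θ (((r:ℝ) ^ m)⁻¹) = ((r:ℝ) ^ m - 1) / (((r:ℝ) - 1) * (r:ℝ) ^ (2 * m)) := by
  have hr1 : (1:ℝ) < (r:ℝ) := by exact_mod_cast lt_of_lt_of_le one_lt_two (by exact_mod_cast hr)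
  have hr0 : (0:ℝ) < (r:ℝ) := lt_trans one_pos hr1
  have hrne : (r:ℝ) ≠ 0 := ne_of_gt hr0
  have hvanish : ∀ j ∉ Finset.range m, θ ((r:ℝ) ^ j * ((r:ℝ) ^ m)⁻¹) / (r:ℝ) ^ j = 0 := by
    intro j hj
    have hmj : m ≤ j := le_of_not_gt (fun h => hj (Finset.mem_range.mpr h))
    have : (r:ℝ) ^ j * ((r:ℝ) ^ m)⁻¹ = (r:ℝ) ^ (j - m) := by
      rw [pow_sub₀ _ hrne hmj]
    rw [this]
    have : θ ((r:ℝ) ^ (j - m)) = 0 := by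
      have := theta_nat θ hp h0 (r ^ (j - m))
      push_cast at this
      exact this
    simp [this]
  rw [Uop, tsum_eq_sum hvanish]
  have hterm : ∀ j ∈ Finset.range m, θ ((r:ℝ) ^ j * ((r:ℝ) ^ m)⁻¹) / (r:ℝ) ^ j
      = (r:ℝ) ^ j / (r:ℝ) ^ (2 * m) := by
    intro j hj
    have hjm : j < m := Finset.mem_range.mp hj
    have hx0 : (0:ℝ) ≤ (r:ℝ) ^ j * ((r:ℝ) ^ m)⁻¹ := by positivity
    have hx1 : (r:ℝ) ^ j * ((r:ℝ) ^ m)⁻¹ ≤ 1 / (r:ℝ) := by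
      rw [← div_eq_mul_inv, div_le_div_iff₀ (by positivity) hr0]
      calc (r:ℝ) ^ j * (r:ℝ) = (r:ℝ) ^ (j+1) := by ring
        _ ≤ (r:ℝ) ^ m := pow_le_pow_right₀ hr1.le hjm
        _ = 1 * (r:ℝ) ^ m := by ring
    rw [hθsq _ ⟨hx0, hx1⟩]
    rw [mul_pow, ← pow_mul, inv_pow, ← pow_mul]
    field_simp
    ring
  rw [Finset.sum_congr rfl hterm, ← Finset.sum_div, geom_sum_eq (ne_of_gt hr1)]
  field_simp

theorem stmt18 (r : ℕ) (hr : 2 ≤ r) (θ : ℝ → ℝ) (hθ : IsCp θ)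
    (hθsq : ∀ x ∈ Set.Icc (0:ℝ) (1 / (r:ℝ)), θ x = x ^ 2) :
    (∀ n : ℕ, Del r (Uop r θ) n 0 (1 / (r:ℝ)) = -2 / ((r:ℝ) - 1)) ∧
      ¬ ∃ c : ℝ, 0 < c ∧ memP r c (Uop r θ) := by
  obtain ⟨hcont, hp, h0⟩ := hθ
  have hr1 : (1:ℝ) < (r:ℝ) := by exact_mod_cast lt_of_lt_of_le one_lt_two (by exact_mod_cast hr)
  have hr0 : (0:ℝ) < (r:ℝ) := lt_trans one_pos hr1
  have hrne : (r:ℝ) ≠ 0 := ne_of_gt hr0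
  have hr1ne : (r:ℝ) - 1 ≠ 0 := sub_ne_zero.mpr (ne_of_gt hr1)
  have hU0 : Uop r θ 0 = 0 := by simp [Uop, h0]
  have hA := key r hr θ hp h0 hθsq
  have hmain : ∀ n : ℕ, Del r (Uop r θ) n 0 (1 / (r:ℝ)) = -2 / ((r:ℝ) - 1) := by
    intro n
    have e1 : ((0:ℝ) + 1) / (r:ℝ) ^ n = ((r:ℝ) ^ n)⁻¹ := by rw [zero_add, one_div]
    have e2 : ((0:ℝ) + 1 / (r:ℝ)) / (r:ℝ) ^ n = ((r:ℝ) ^ (n+1))⁻¹ := by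
      rw [zero_add, pow_succ, mul_inv, one_div, div_eq_mul_inv, mul_comm]
    have e3 : (0:ℝ) / (r:ℝ) ^ n = 0 := by simp
    rw [Del, delP, delM, Int.cast_zero, e1, e2, e3, hU0, hA n, hA (n+1)]
    have hpn : (r:ℝ) ^ n ≠ 0 := pow_ne_zero _ hrne
    field_simp
    ring
  refine ⟨hmain, ?_⟩
  rintro ⟨c, hc, hmem⟩
  obtain ⟨n, hn⟩ := pow_unbounded_of_one_lt (1 / (c * ((r:ℝ) - 1))) hr1
  have hk1 : (0:ℤ) ≤ 0 := le_rfl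
  have hk2 : (0:ℤ) ≤ (r:ℤ) ^ n - 1 := by
    have : (1:ℤ) ≤ (r:ℤ) ^ n := one_le_pow₀ (by exact_mod_cast Nat.one_le_of_lt hr)
    omega
  have hy : (1 / (r:ℝ)) ∈ Set.Ioo (0:ℝ) 1 := by
    constructor
    · positivity
    · rw [div_lt_one hr0]; exact hr1
  have hle := hmem n 0 hk1 hk2 (1 / (r:ℝ)) hy
  rw [hmain n] at hle
  have hposr1 : (0:ℝ) < (r:ℝ) - 1 := sub_pos.mpr hr1
  have e1 : 1 < (r:ℝ) ^ n * (c * ((r:ℝ) - 1)) := (div_lt_iff₀ (by positivity)).mp hn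
  have e2 : -2 ≤ -2 * c * (r:ℝ) ^ n * ((r:ℝ) - 1) := (div_le_iff₀ hposr1).mp hle
  nlinarith
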